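/- Let x ∈ M(n). Then x is strongly regular if and only if the d(n) matrices obtained by embedding the powers (x_m)^{m−k} of the cutoffs into M(n) (extending the m×m block by zeros), over all m ∈ {1,...,n} and k ∈ {1,...,m}, are linearly independent in M(n). Here (x_m)^0 = Id_m. -/

import Mathlib

open Matrix Polynomial

noncomputable section

attribute [local instance] Matrix.normedAddCommGroup Matrix.normedSpace

def d (k : ℕ) : ℕ := k * (k + 1) / 2

def cutoff {n : ℕ} (x : Matrix (Fin n) (Fin n) ℂ) {m : ℕ} (h : m ≤ n) :
    Matrix (Fin m) (Fin m) ℂ :=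
  Matrix.of fun i j => x (Fin.castLE h i) (Fin.castLE h j)

def Phi (n : ℕ) (x : Matrix (Fin n) (Fin n) ℂ) : (Σ m : Fin n, Fin (m.1 + 1)) → ℂ :=
  fun p => (-1 : ℂ) ^ (p.1.1 - p.2.1 + 1) * ((cutoff x p.1.2).charpoly.coeff p.2.1)

def StronglyRegular {n : ℕ} (x : Matrix (Fin n) (Fin n) ℂ) : Prop :=
  Function.Surjective (fderiv ℂ (Phi n) x)

def InEB {n : ℕ} (x : Matrix (Fin n) (Fin n) ℂ) : Prop :=
  (∀ i j : Fin n, i.1 = j.1 + 1 → x i j = -1) ∧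
  (∀ i j : Fin n, j.1 + 1 < i.1 → x i j = 0)

def EigDisjoint {n : ℕ} (x : Matrix (Fin n) (Fin n) ℂ) : Prop :=
  (∀ (m : ℕ) (_ : 1 ≤ m) (hm : m ≤ n), (cutoff x hm).charpoly.roots.toFinset.card = m) ∧
  (∀ (m : ℕ) (_ : 1 ≤ m) (hm : m + 1 ≤ n) (z : ℂ),
    ¬((cutoff x (Nat.le_of_succ_le hm)).charpoly.IsRoot z ∧
      (cutoff x hm).charpoly.IsRoot z))

def embed {n m : ℕ} (h : m ≤ n) (y : Matrix (Fin m) (Fin m) ℂ) :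
    Matrix (Fin n) (Fin n) ℂ :=
  Matrix.of fun i j =>
    if hi : i.1 < m then if hj : j.1 < m then y ⟨i.1, hi⟩ ⟨j.1, hj⟩ else 0 else 0

def GSet {n : ℕ} (x : Matrix (Fin n) (Fin n) ℂ) {m : ℕ} (h : m ≤ n) :
    Set (Matrix (Fin n) (Fin n) ℂ) :=
  {g | IsUnit g ∧
    (∀ i j : Fin n, m ≤ i.1 ∨ m ≤ j.1 → g i j = (1 : Matrix (Fin n) (Fin n) ℂ) i j) ∧
    cutoff g h ∈ Submodule.span ℂ (Set.range fun k : ℕ => (cutoff x h) ^ k)}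

def centSubmodule {n : ℕ} (x : Matrix (Fin n) (Fin n) ℂ) :
    Submodule ℂ (Matrix (Fin n) (Fin n) ℂ) where
  carrier := {y | x * y = y * x}
  add_mem' := fun {a b} ha hb => by
    simp only [Set.mem_setOf_eq] at *
    rw [mul_add, add_mul, ha, hb]
  zero_mem' := by simp
  smul_mem' := fun c a ha => by
    simp only [Set.mem_setOf_eq] at *
    rw [mul_smul_comm, smul_mul_assoc, ha]

def Zsub {n : ℕ} (x : Matrix (Fin n) (Fin n) ℂ) {m : ℕ} (h : m ≤ n) :
    Submodule ℂ (Matrix (Fin n) (Fin n) ℂ) :=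
  Submodule.span ℂ (Set.range fun k : ℕ => embed h ((cutoff x h) ^ k))

def IsJacobi {n : ℕ} (x : Matrix (Fin n) (Fin n) ℂ) : Prop :=
  (∀ i j : Fin n, (i.1 + 1 < j.1 ∨ j.1 + 1 < i.1) → x i j = 0) ∧
  (∀ i j : Fin n, (i.1 + 1 = j.1 ∨ j.1 + 1 = i.1) → x i j ≠ 0)

section Aux

/-- Any multilinear map on finite-dimensional normed spaces is continuous. -/
theorem aux_multilinear_continuous {ι : Type*} [Fintype ι]
    {E : ι → Type*} [∀ i, NormedAddCommGroup (E i)] [∀ i, NormedSpace ℂ (E i)]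
    [∀ i, FiniteDimensional ℂ (E i)] (f : MultilinearMap ℂ E ℂ) : Continuous f := by
  classical
  set B : ∀ i, Module.Basis (Fin (Module.finrank ℂ (E i))) ℂ (E i) := fun i => Module.finBasis ℂ (E i)
    with hB
  have key : ∀ x : ∀ i, E i,
      f x = ∑ r : ∀ i, Fin (Module.finrank ℂ (E i)),
        (∏ i, (B i).repr (x i) (r i)) • f (fun i => B i (r i)) := by
    intro x
    conv_lhs => rw [show x = fun i => ∑ j, (B i).repr (x i) j • B i j from
      funext fun i => ((B i).sum_repr (x i)).symm]
    rw [f.map_sum]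
    exact Finset.sum_congr rfl fun r _ => f.map_smul_univ _ _
  have hc : Continuous fun x : ∀ i, E i => ∑ r : ∀ i, Fin (Module.finrank ℂ (E i)),
      (∏ i, (B i).repr (x i) (r i)) • f (fun i => B i (r i)) := by
    refine continuous_finset_sum _ fun r _ => Continuous.fun_smul ?_ continuous_const
    refine continuous_finset_prod _ fun i _ => ?_
    have h1 : Continuous fun y : E i => (B i).repr y (r i) := by
      exact ((B i).coord (r i)).continuous_of_finiteDimensional
    exact h1.comp (continuous_apply i)
  exact hc.congr fun x => (key x).symm

end Aux

section AuxAlg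

variable {m : ℕ}

/-- The coefficient matrices of the adjugate of the characteristic matrix. -/
def Bm (y : Matrix (Fin m) (Fin m) ℂ) (k : ℕ) : Matrix (Fin m) (Fin m) ℂ :=
  (matPolyEquiv (adjugate (charmatrix y))).coeff k

lemma Bm_apply (y : Matrix (Fin m) (Fin m) ℂ) (k : ℕ) (i j : Fin m) :
    Bm y k i j = ((adjugate (charmatrix y)) i j).coeff k := by
  simp [Bm, matPolyEquiv_coeff_apply]

lemma kid (y : Matrix (Fin m) (Fin m) ℂ) (k : ℕ) :
    Bm y k = y * Bm y (k + 1) + (Matrix.charpoly y).coeff (k + 1) • 1 := by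
  have H := Matrix.mul_adjugate (charmatrix y)
  apply_fun matPolyEquiv at H
  rw [_root_.map_mul, matPolyEquiv_charmatrix, matPolyEquiv_smul_one] at H
  have h2 := congrArg (fun q => Polynomial.coeff q (k + 1)) H
  simp only [sub_mul, coeff_sub, coeff_X_mul, coeff_C_mul, coeff_map] at h2
  rw [Algebra.algebraMap_eq_smul_one] at h2
  have h3 := sub_eq_iff_eq_add.mp h2
  rw [Bm, Bm, h3, add_comm]
  rfl

lemma Bvanish (y : Matrix (Fin m) (Fin m) ℂ) : ∀ k, m ≤ k → Bm y k = 0 := by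
  have hstep : ∀ k, m ≤ k → Bm y k = y * Bm y (k + 1) := by
    intro k hk
    have hc0 : (Matrix.charpoly y).coeff (k + 1) = 0 := by
      refine Polynomial.coeff_eq_zero_of_natDegree_lt ?_
      rw [Matrix.charpoly_natDegree_eq_dim, Fintype.card_fin]
      omega
    rw [kid y k, hc0, zero_smul, add_zero]
  have hiter : ∀ j k, m ≤ k → Bm y k = y ^ j * Bm y (k + j) := by
    intro j
    induction j with
    | zero => intro k hk; simp
    | succ j ih =>
      intro k hk
      rw [hstep k hk, ih (k + 1) (by omega)]
      rw [← mul_assoc, ← pow_succ']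
      have hkj : k + 1 + j = k + (j + 1) := by omega
      rw [hkj]
  intro k hk
  rw [hiter ((matPolyEquiv (adjugate (charmatrix y))).natDegree + 1) k hk]
  have : (matPolyEquiv (adjugate (charmatrix y))).coeff
      (k + ((matPolyEquiv (adjugate (charmatrix y))).natDegree + 1)) = 0 :=
    Polynomial.coeff_eq_zero_of_natDegree_lt (by omega)
  rw [Bm, this, mul_zero]

lemma Btop (y : Matrix (Fin m) (Fin m) ℂ) (hm : 1 ≤ m) : Bm y (m - 1) = 1 := by
  have h1 := kid y (m - 1)
  rw [Nat.sub_add_cancel hm] at h1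
  rw [h1, Bvanish y m le_rfl, mul_zero, zero_add]
  have hdeg : (Matrix.charpoly y).natDegree = m := by
    rw [Matrix.charpoly_natDegree_eq_dim, Fintype.card_fin]
  have hc : (Matrix.charpoly y).coeff m = 1 := by
    have := (Matrix.charpoly_monic y).coeff_natDegree
    rwa [hdeg] at this
  rw [hc, one_smul]

lemma mul_mem_pspan (y : Matrix (Fin m) (Fin m) ℂ) {e : ℕ} {w : Matrix (Fin m) (Fin m) ℂ}
    (hw : w ∈ Submodule.span ℂ ((y ^ ·) '' Set.Iio e)) :
    y * w ∈ Submodule.span ℂ ((y ^ ·) '' Set.Iio (e + 1)) := by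
  induction hw using Submodule.span_induction with
  | mem z hz =>
    obtain ⟨t, ht, rfl⟩ := hz
    refine Submodule.subset_span ⟨t + 1, by simp at ht ⊢; omega, ?_⟩
    show y ^ (t + 1) = y * y ^ t
    rw [pow_succ']
  | zero => rw [mul_zero]; exact Submodule.zero_mem _
  | add a b _ _ ha hb => rw [mul_add]; exact Submodule.add_mem _ ha hb
  | smul c a _ ha => rw [mul_smul_comm]; exact Submodule.smul_mem _ _ ha

lemma rel (y : Matrix (Fin m) (Fin m) ℂ) :
    ∀ e, e + 1 ≤ m → y ^ e - Bm y (m - 1 - e) ∈ Submodule.span ℂ ((y ^ ·) '' Set.Iio e) := by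
  intro e
  induction e with
  | zero =>
    intro h1
    have : y ^ 0 - Bm y (m - 1 - 0) = 0 := by
      rw [Nat.sub_zero, Btop y h1, pow_zero, sub_self]
    rw [this]; exact Submodule.zero_mem _
  | succ e ih =>
    intro h2
    have hk : (m - 1 - (e + 1)) + 1 = m - 1 - e := by omega
    have hkid := kid y (m - 1 - (e + 1))
    rw [hk] at hkid
    have heq : y ^ (e + 1) - Bm y (m - 1 - (e + 1))
        = y * (y ^ e - Bm y (m - 1 - e)) + (-((Matrix.charpoly y).coeff (m - 1 - e))) • 1 := by
      rw [hkid, mul_sub, ← pow_succ']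
      module
    rw [heq]
    refine Submodule.add_mem _ (mul_mem_pspan y (ih (by omega))) ?_
    refine Submodule.smul_mem _ _ (Submodule.subset_span ⟨0, by simp, pow_zero y⟩)

lemma lemA (y : Matrix (Fin m) (Fin m) ℂ) {k : ℕ} (hk : k < m) :
    Bm y k ∈ Submodule.span ℂ (Set.range fun e : Fin m => y ^ (e : ℕ)) := by
  have h1 : m - 1 - (m - 1 - k) = k := by omega
  have hrel := rel y (m - 1 - k) (by omega)
  rw [h1] at hrel
  have h2 : Bm y k = y ^ (m - 1 - k) - (y ^ (m - 1 - k) - Bm y k) := (sub_sub_cancel _ _).symm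
  rw [h2]
  refine Submodule.sub_mem _ (Submodule.subset_span ⟨⟨m - 1 - k, by omega⟩, rfl⟩) ?_
  refine Submodule.span_mono ?_ hrel
  rintro z ⟨t, ht, rfl⟩
  simp only [Set.mem_Iio] at ht
  exact ⟨⟨t, by omega⟩, rfl⟩

lemma lemB (y : Matrix (Fin m) (Fin m) ℂ) :
    ∀ e, e < m → y ^ e ∈ Submodule.span ℂ (Set.range fun k : Fin m => Bm y (k : ℕ)) := by
  intro e
  induction e using Nat.strong_induction_on with
  | _ e ih =>
    intro he
    have hrel := rel y e (by omega)
    have h2 : y ^ e = (y ^ e - Bm y (m - 1 - e)) + Bm y (m - 1 - e) := (sub_add_cancel _ _).symm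
    rw [h2]
    refine Submodule.add_mem _ ?_ (Submodule.subset_span ⟨⟨m - 1 - e, by omega⟩, rfl⟩)
    refine Submodule.span_le.2 ?_ hrel
    rintro z ⟨t, ht, rfl⟩
    simp only [Set.mem_Iio] at ht
    exact ih t ht (by omega)

end AuxAlg

section AuxAnalytic

variable {n m : ℕ}

def epair : (ℂ × ℂ) →ₗ[ℂ] Polynomial ℂ :=
  (Polynomial.monomial 0).comp (LinearMap.fst ℂ ℂ ℂ) +
    (Polynomial.monomial 1).comp (LinearMap.snd ℂ ℂ ℂ)

lemma epair_apply (q : ℂ × ℂ) : epair q = C q.1 + C q.2 * X := by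
  simp [epair, LinearMap.add_apply, C_mul_X_eq_monomial, monomial_zero_left]

def Dml (m k : ℕ) : MultilinearMap ℂ (fun _ : Fin m => (Fin m → ℂ × ℂ)) ℂ :=
  ((Polynomial.lcoeff ℂ k).compMultilinearMap
    (MultilinearMap.restrictScalars ℂ
      (detRowAlternating :
        AlternatingMap (Polynomial ℂ) (Fin m → Polynomial ℂ) (Polynomial ℂ) (Fin m)).toMultilinearMap)).compLinearMap
    fun _ => LinearMap.pi fun j => epair.comp (LinearMap.proj j)

lemma Dml_apply (m k : ℕ) (v : Fin m → Fin m → ℂ × ℂ) :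
    Dml m k v = (Matrix.det (Matrix.of fun i j => epair (v i j))).coeff k := rfl

def Dcm (m k : ℕ) : ContinuousMultilinearMap ℂ (fun _ : Fin m => (Fin m → ℂ × ℂ)) ℂ :=
  ⟨Dml m k, aux_multilinear_continuous _⟩

def Afun (hmn : m ≤ n) (y : Matrix (Fin n) (Fin n) ℂ) : Fin m → Fin m → ℂ × ℂ :=
  fun i j => (-(y (Fin.castLE hmn i) (Fin.castLE hmn j)), if i = j then 1 else 0)

def cvec (m : ℕ) : Fin m → Fin m → ℂ × ℂ := fun i j => (0, if i = j then 1 else 0)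

def Alin (hmn : m ≤ n) : Matrix (Fin n) (Fin n) ℂ →ₗ[ℂ] (Fin m → Fin m → ℂ × ℂ) where
  toFun h := fun i j => (-(h (Fin.castLE hmn i) (Fin.castLE hmn j)), 0)
  map_add' a b := by
    funext i j
    simp [Matrix.add_apply, Prod.ext_iff]
    ring
  map_smul' c a := by
    funext i j
    simp [Matrix.smul_apply, Prod.ext_iff, smul_eq_mul]

def AlinC (hmn : m ≤ n) : Matrix (Fin n) (Fin n) ℂ →L[ℂ] (Fin m → Fin m → ℂ × ℂ) :=
  LinearMap.toContinuousLinearMap (Alin hmn)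

lemma Afun_eq (hmn : m ≤ n) (y : Matrix (Fin n) (Fin n) ℂ) :
    Afun hmn y = cvec m + Alin hmn y := by
  funext i j
  simp [Afun, cvec, Alin, Prod.ext_iff]

lemma ofEpair_Afun (hmn : m ≤ n) (y : Matrix (Fin n) (Fin n) ℂ) :
    (Matrix.of fun i j => epair (Afun hmn y i j)) = charmatrix (cutoff y hmn) := by
  ext i j
  by_cases hij : i = j
  · subst hij
    simp [Afun, epair_apply, charmatrix_apply_eq, cutoff, map_neg]
    ring
  · simp [Afun, hij, epair_apply, charmatrix_apply_ne _ _ _ hij, cutoff, map_neg]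

def sgn {n : ℕ} (p : Σ m : Fin n, Fin (m.1 + 1)) : ℂ := (-1) ^ (p.1.1 - p.2.1 + 1)

lemma Phi_comp (y : Matrix (Fin n) (Fin n) ℂ) (p : Σ m : Fin n, Fin (m.1 + 1)) :
    Phi n y p = sgn p * Dcm (p.1.1 + 1) p.2.1 (Afun p.1.2 y) := by
  unfold Phi sgn
  congr 1
  show _ = Dml _ _ _
  rw [Dml_apply, ofEpair_Afun]
  rfl

def Lp (x : Matrix (Fin n) (Fin n) ℂ) (p : Σ m : Fin n, Fin (m.1 + 1)) :
    Matrix (Fin n) (Fin n) ℂ →L[ℂ] ℂ :=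
  sgn p • (((Dcm (p.1.1 + 1) p.2.1).linearDeriv (Afun p.1.2 x)).comp (AlinC p.1.2))

lemma hasD (x : Matrix (Fin n) (Fin n) ℂ) :
    HasFDerivAt (Phi n) (ContinuousLinearMap.pi (Lp x)) x := by
  apply hasFDerivAt_pi.2
  intro p
  have h2 : HasFDerivAt (fun y => Afun (p.1.2 : p.1.1 + 1 ≤ n) y) (AlinC p.1.2) x := by
    have h3 : HasFDerivAt (fun y => cvec (p.1.1 + 1) + AlinC p.1.2 y) (AlinC p.1.2) x :=
      ((AlinC p.1.2).hasFDerivAt).const_add _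
    have h4 : (fun y : Matrix (Fin n) (Fin n) ℂ => Afun (p.1.2 : p.1.1 + 1 ≤ n) y)
        = fun y => cvec (p.1.1 + 1) + AlinC p.1.2 y := funext fun y => Afun_eq _ y
    rw [h4]
    exact h3
  have h1 := (Dcm (p.1.1 + 1) p.2.1).hasFDerivAt (x := Afun p.1.2 x)
  have h5 := (h1.comp x h2).const_mul (sgn p)
  have h6 : (fun y : Matrix (Fin n) (Fin n) ℂ =>
      sgn p * ((⇑(Dcm (p.1.1 + 1) p.2.1) ∘ fun y => Afun (p.1.2 : p.1.1 + 1 ≤ n) y) y))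
      = fun y => Phi n y p := funext fun y => (Phi_comp y p).symm
  rw [h6] at h5
  exact h5

end AuxAnalytic

section AuxDual

variable {n m : ℕ}

lemma det_updateRow_adj {R : Type*} [CommRing R] (A : Matrix (Fin m) (Fin m) R)
    (i : Fin m) (v : Fin m → R) :
    (A.updateRow i v).det = ∑ j, v j * adjugate A j i := by
  have h1 : (A.updateRow i v).det = cramer Aᵀ v i := by
    rw [cramer_apply, updateCol_transpose, det_transpose]
  have h2 : v = ∑ j, v j • (Pi.single j (1 : R) : Fin m → R) := by
    funext t
    rw [Finset.sum_apply]
    simp [Pi.single_apply]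
  rw [h1]
  conv_lhs => rw [h2]
  rw [map_sum, Finset.sum_apply]
  refine Finset.sum_congr rfl fun j _ => ?_
  rw [_root_.map_smul, Pi.smul_apply, smul_eq_mul]
  congr 1

lemma sum_extend (hmn : m ≤ n) (G : Fin n → ℂ) (hG : ∀ a : Fin n, ¬(a.1 < m) → G a = 0) :
    ∑ a, G a = ∑ i : Fin m, G (Fin.castLE hmn i) := by
  classical
  have h0 : ∑ a ∈ Finset.univ.map (Fin.castLEEmb hmn), G a
      = ∑ i : Fin m, G (Fin.castLE hmn i) := by
    rw [Finset.sum_map]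
    rfl
  rw [← h0]
  refine (Finset.sum_subset (Finset.subset_univ _) ?_).symm
  intro a _ ha
  refine hG a fun hlt => ha ?_
  exact Finset.mem_map.2 ⟨⟨a.1, hlt⟩, Finset.mem_univ _, rfl⟩

end AuxDual

section AuxDual2

variable {n m : ℕ}

lemma embed_apply_lt (hmn : m ≤ n) (B : Matrix (Fin m) (Fin m) ℂ) (i j : Fin m) :
    embed hmn B (Fin.castLE hmn i) (Fin.castLE hmn j) = B i j := by
  simp [embed]

lemma embed_apply_zl (hmn : m ≤ n) (B : Matrix (Fin m) (Fin m) ℂ) {i : Fin n} (j : Fin n)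
    (hi : ¬(i.1 < m)) : embed hmn B i j = 0 := by
  simp [embed, hi]

lemma embed_apply_zr (hmn : m ≤ n) (B : Matrix (Fin m) (Fin m) ℂ) (i : Fin n) {j : Fin n}
    (hj : ¬(j.1 < m)) : embed hmn B i j = 0 := by
  simp [embed, hj]

lemma trace_embed_mul (hmn : m ≤ n) (B : Matrix (Fin m) (Fin m) ℂ)
    (h : Matrix (Fin n) (Fin n) ℂ) :
    Matrix.trace (embed hmn B * h)
      = ∑ i : Fin m, ∑ j : Fin m, B i j * h (Fin.castLE hmn j) (Fin.castLE hmn i) := by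
  rw [Matrix.trace]
  rw [sum_extend hmn _ (fun a ha => by
    simp [Matrix.diag, Matrix.mul_apply, embed_apply_zl hmn B _ ha])]
  refine Finset.sum_congr rfl fun i _ => ?_
  rw [Matrix.diag_apply, Matrix.mul_apply]
  rw [sum_extend hmn _ (fun b hb => by
    rw [embed_apply_zr hmn B _ hb, zero_mul])]
  refine Finset.sum_congr rfl fun j _ => ?_
  rw [embed_apply_lt]

def tform (n : ℕ) :
    Matrix (Fin n) (Fin n) ℂ →ₗ[ℂ] Module.Dual ℂ (Matrix (Fin n) (Fin n) ℂ) where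
  toFun Cm := (Matrix.traceLinearMap (Fin n) ℂ ℂ).comp (LinearMap.mulLeft ℂ Cm)
  map_add' a b := by
    ext h
    simp [add_mul]
  map_smul' c a := by
    ext h
    simp [Matrix.smul_mul]

lemma tform_apply (Cm h : Matrix (Fin n) (Fin n) ℂ) :
    tform n Cm h = Matrix.trace (Cm * h) := rfl

lemma tform_ker : LinearMap.ker (tform n) = ⊥ := by
  rw [LinearMap.ker_eq_bot']
  intro Cm hC
  ext a b
  have h0 := congrArg (fun φ : Module.Dual ℂ (Matrix (Fin n) (Fin n) ℂ) =>
    φ (Matrix.single b a 1)) hC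
  simp only [tform_apply, LinearMap.zero_apply] at h0
  rw [show Cm * Matrix.single b a (1 : ℂ)
      = Matrix.of fun s t => if t = a then Cm s b else 0 by
    ext s t
    rw [Matrix.mul_apply]
    by_cases hta : t = a
    · subst hta
      simp [Matrix.single, Finset.sum_ite_eq]
    · have h2 : a ≠ t := fun h => hta h.symm
      simp [Matrix.single, hta, h2]
    ] at h0
  rw [Matrix.trace] at h0
  simpa [Matrix.diag] using h0

lemma surj_iff {I : Type*} [Fintype I] {V : Type*} [AddCommGroup V] [Module ℂ V]
    (L : V →ₗ[ℂ] (I → ℂ)) :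
    Function.Surjective L ↔ LinearIndependent ℂ (fun i => (LinearMap.proj i).comp L) := by
  classical
  constructor
  · intro hs
    rw [Fintype.linearIndependent_iff]
    intro c hc j
    obtain ⟨v, hv⟩ := hs (Pi.single j 1)
    have h1 := congrArg (fun φ : V →ₗ[ℂ] ℂ => φ v) hc
    simp only [LinearMap.coe_sum, Finset.sum_apply, LinearMap.smul_apply,
      LinearMap.comp_apply, LinearMap.proj_apply, LinearMap.zero_apply, smul_eq_mul] at h1
    rw [hv] at h1
    simpa [Pi.single_apply] using h1
  · intro hind
    rw [← LinearMap.range_eq_top]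
    by_contra hne
    obtain ⟨f, hf0, hfbot⟩ := Submodule.exists_dual_map_eq_bot_of_lt_top
      (lt_top_iff_ne_top.2 hne) inferInstance
    have hfl : ∀ v, f (L v) = 0 := by
      intro v
      have hmem : f (L v) ∈ Submodule.map f (LinearMap.range L) :=
        ⟨L v, LinearMap.mem_range_self L v, rfl⟩
      rw [hfbot] at hmem
      simpa using hmem
    have hsingle : ∀ w : I → ℂ, f w = ∑ i, w i * f (Pi.single i 1) := by
      intro w
      conv_lhs => rw [show w = ∑ i, Pi.single i (w i) from (Finset.univ_sum_single w).symm]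
      rw [map_sum]
      refine Finset.sum_congr rfl fun i _ => ?_
      rw [show (Pi.single i (w i) : I → ℂ) = w i • (Pi.single i (1 : ℂ) : I → ℂ) by
        funext t; simp [Pi.single_apply]]
      rw [_root_.map_smul, smul_eq_mul]
    have hc : ∑ i, f (Pi.single i 1) • ((LinearMap.proj i).comp L) = 0 := by
      ext v
      simp only [LinearMap.coe_sum, Finset.sum_apply, LinearMap.smul_apply,
        LinearMap.comp_apply, LinearMap.proj_apply, LinearMap.zero_apply, smul_eq_mul]
      rw [← hfl v, hsingle (L v)]
      refine Finset.sum_congr rfl fun i _ => mul_comm _ _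
    have hc0 := Fintype.linearIndependent_iff.1 hind _ hc
    apply hf0
    refine LinearMap.ext fun w => ?_
    rw [hsingle w]
    simp [hc0]
  
end AuxDual2


section AuxFinal

variable {n m : ℕ}

lemma linearDeriv_eval (hmn : m ≤ n) (k : ℕ) (x h : Matrix (Fin n) (Fin n) ℂ) :
    ((Dcm m k).linearDeriv (Afun hmn x)) (Alin hmn h)
      = ∑ i : Fin m, ∑ j : Fin m,
          (-(h (Fin.castLE hmn i) (Fin.castLE hmn j))) * Bm (cutoff x hmn) k j i := by
  rw [ContinuousMultilinearMap.linearDeriv_apply]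
  refine Finset.sum_congr rfl fun i _ => ?_
  have hup : (Matrix.of fun a b => epair (Function.update (Afun hmn x) i (Alin hmn h i) a b))
      = (charmatrix (cutoff x hmn)).updateRow i
          (fun j => C (-(h (Fin.castLE hmn i) (Fin.castLE hmn j)))) := by
    refine Matrix.ext fun a b => ?_
    by_cases hii : a = i
    · subst hii
      rw [Matrix.of_apply, Function.update_self, Matrix.updateRow_self]
      show epair (Alin hmn h a b) = _
      simp [Alin, epair_apply]
    · rw [Matrix.of_apply, Function.update_of_ne hii, Matrix.updateRow_ne hii]
      exact congrFun (congrFun (ofEpair_Afun hmn x) a) b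
  show Dml m k _ = _
  rw [Dml_apply, hup, det_updateRow_adj, Polynomial.finset_sum_coeff]
  refine Finset.sum_congr rfl fun j _ => ?_
  rw [Polynomial.coeff_C_mul, Bm_apply]

def Cmat (x : Matrix (Fin n) (Fin n) ℂ) (p : Σ m : Fin n, Fin (m.1 + 1)) :
    Matrix (Fin n) (Fin n) ℂ :=
  (-(sgn p)) • embed p.1.2 (Bm (cutoff x p.1.2) p.2.1)

lemma Lp_eq_tform (x : Matrix (Fin n) (Fin n) ℂ) (p : Σ m : Fin n, Fin (m.1 + 1))
    (h : Matrix (Fin n) (Fin n) ℂ) :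
    Lp x p h = tform n (Cmat x p) h := by
  have h1 : Lp x p h
      = sgn p * (((Dcm (p.1.1 + 1) p.2.1).linearDeriv (Afun p.1.2 x)) (Alin p.1.2 h)) := rfl
  rw [h1, linearDeriv_eval]
  rw [tform_apply, Cmat, Matrix.smul_mul, Matrix.trace_smul, smul_eq_mul, trace_embed_mul]
  rw [Finset.sum_comm]
  have h2 : ∀ jj ii : Fin (p.1.1 + 1),
      (-(h (Fin.castLE p.1.2 ii) (Fin.castLE p.1.2 jj))) * Bm (cutoff x p.1.2) p.2.1 jj ii
      = -(Bm (cutoff x p.1.2) p.2.1 jj ii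
          * h (Fin.castLE p.1.2 ii) (Fin.castLE p.1.2 jj)) := fun _ _ => by ring
  simp only [h2, Finset.sum_neg_distrib]
  ring

lemma hfun (x : Matrix (Fin n) (Fin n) ℂ) :
    (fun p : Σ m : Fin n, Fin (m.1 + 1) =>
        (LinearMap.proj p).comp (ContinuousLinearMap.pi (Lp x)).toLinearMap)
      = ⇑(tform n) ∘ (Cmat x) := by
  funext p
  refine LinearMap.ext fun h => ?_
  show (ContinuousLinearMap.pi (Lp x)) h p = tform n (Cmat x p) h
  rw [ContinuousLinearMap.pi_apply, Lp_eq_tform]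

def embedL (hmn : m ≤ n) : Matrix (Fin m) (Fin m) ℂ →ₗ[ℂ] Matrix (Fin n) (Fin n) ℂ where
  toFun := embed hmn
  map_add' a b := by
    ext i j
    by_cases hi : i.1 < m
    · by_cases hj : j.1 < m <;> simp [embed, hi, hj]
    · simp [embed, hi]
  map_smul' c a := by
    ext i j
    by_cases hi : i.1 < m
    · by_cases hj : j.1 < m <;> simp [embed, hi, hj]
    · simp [embed, hi]

lemma span_CX (x : Matrix (Fin n) (Fin n) ℂ) :
    Submodule.span ℂ (Set.range (Cmat x))
      = Submodule.span ℂ (Set.range fun p : Σ m : Fin n, Fin (m.1 + 1) =>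
          embed p.1.2 ((cutoff x p.1.2) ^ (p.1.1 - p.2.1))) := by
  apply le_antisymm
  · rw [Submodule.span_le]
    rintro z ⟨p, rfl⟩
    refine Submodule.smul_mem _ _ ?_
    have hA := lemA (cutoff x p.1.2) (k := (p.2.1 : ℕ)) p.2.isLt
    have h1 : embed p.1.2 (Bm (cutoff x p.1.2) p.2.1)
        ∈ Submodule.map (embedL p.1.2)
          (Submodule.span ℂ (Set.range fun e : Fin (p.1.1 + 1) =>
            cutoff x p.1.2 ^ (e : ℕ))) := ⟨_, hA, rfl⟩
    rw [Submodule.map_span] at h1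
    refine Submodule.span_le.2 ?_ h1
    rintro w ⟨_, ⟨e, rfl⟩, rfl⟩
    apply Submodule.subset_span
    refine ⟨⟨p.1, ⟨p.1.1 - (e : ℕ), by omega⟩⟩, ?_⟩
    show embed p.1.2 (cutoff x p.1.2 ^ (p.1.1 - (p.1.1 - (e : ℕ))))
      = embedL p.1.2 (cutoff x p.1.2 ^ (e : ℕ))
    have he : p.1.1 - (p.1.1 - (e : ℕ)) = (e : ℕ) := by
      have := e.isLt
      omega
    rw [he]
    rfl
  · rw [Submodule.span_le]
    rintro z ⟨p, rfl⟩
    have hB := lemB (cutoff x p.1.2) (p.1.1 - p.2.1) (by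
      have := p.2.isLt
      omega)
    have h1 : embed p.1.2 (cutoff x p.1.2 ^ (p.1.1 - p.2.1))
        ∈ Submodule.map (embedL p.1.2)
          (Submodule.span ℂ (Set.range fun k : Fin (p.1.1 + 1) =>
            Bm (cutoff x p.1.2) (k : ℕ))) := ⟨_, hB, rfl⟩
    rw [Submodule.map_span] at h1
    refine Submodule.span_le.2 ?_ h1
    rintro w ⟨_, ⟨kk, rfl⟩, rfl⟩
    have hne : (-(sgn (⟨p.1, kk⟩ : Σ m : Fin n, Fin (m.1 + 1)))) ≠ 0 := by
      refine neg_ne_zero.mpr (pow_ne_zero _ ?_)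
      norm_num
    have h3 : embedL p.1.2 (Bm (cutoff x p.1.2) (kk : ℕ))
        = (-(sgn (⟨p.1, kk⟩ : Σ m : Fin n, Fin (m.1 + 1))))⁻¹ • Cmat x ⟨p.1, kk⟩ := by
      rw [Cmat, smul_smul, inv_mul_cancel₀ hne, one_smul]
      rfl
    rw [h3]
    exact Submodule.smul_mem _ _ (Submodule.subset_span ⟨⟨p.1, kk⟩, rfl⟩)

end AuxFinal

/-- `x` is strongly regular iff the `d(n)` zero-extended powers `(x_m)^{m-k}`
(`1 ≤ k ≤ m ≤ n`) are linearly independent in `M(n)`. -/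
theorem stmt5 (n : ℕ) (x : Matrix (Fin n) (Fin n) ℂ) :
    StronglyRegular x ↔
      LinearIndependent ℂ (fun p : Σ m : Fin n, Fin (m.1 + 1) =>
        embed p.1.2 ((cutoff x p.1.2) ^ (p.1.1 - p.2.1))) := by
  classical
  have e1 : StronglyRegular x ↔
      Function.Surjective ⇑((ContinuousLinearMap.pi (Lp x)).toLinearMap) := by
    unfold StronglyRegular
    rw [(hasD x).fderiv]
    exact Iff.rfl
  rw [e1, surj_iff, hfun x,
    LinearMap.linearIndependent_iff (tform n) tform_ker,
    linearIndependent_iff_card_eq_finrank_span, linearIndependent_iff_card_eq_finrank_span]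
  unfold Set.finrank
  rw [span_CX x]
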